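/- arXiv:2012.04091 — 3 statements merged into one kernel-verified Lean document; each statement's English description precedes it below -/
import Mathlib

section
/- The Banzhaf interaction transform is inverted by the formula μ(A) = Σ_{D ⊆ C} (1/2)^{|D|} (−1)^{|D \ A|} I^B(D) for all A ⊆ C, where I^B(A) = (1/2^{|C|−|A|}) Σ_{D ⊆ C\A} Σ_{D' ⊆ A} (−1)^{|A|−|D'|} μ(D' ∪ D). -/
open Finset

/-- The Banzhaf interaction index of a set function. -/
noncomputable def IB {m : ℕ} (μ : Finset (Fin m) → ℝ) (A : Finset (Fin m)) : ℝ :=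
  (1 / 2 ^ (m - A.card)) *
    ∑ D ∈ Aᶜ.powerset, ∑ D' ∈ A.powerset, (-1 : ℝ) ^ (A.card - D'.card) * μ (D' ∪ D)

lemma neg_one_pow_sdiff {m : ℕ} (D A : Finset (Fin m)) :
    ((-1:ℝ)) ^ (D \ A).card = ∏ i ∈ D, (if i ∈ A then (1:ℝ) else -1) := by
  rw [Finset.prod_ite, Finset.prod_const_one, Finset.prod_const, one_mul]
  congr 2
  rw [Finset.sdiff_eq_filter]

lemma key {m : ℕ} (A S : Finset (Fin m)) :
    ∑ D : Finset (Fin m), (-1:ℝ) ^ (D \ A).card * (-1:ℝ) ^ (D \ S).card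
      = if S = A then (2:ℝ)^m else 0 := by
  have h : ∀ D : Finset (Fin m), (-1:ℝ)^(D\A).card * (-1:ℝ)^(D\S).card
      = ∏ i ∈ D, ((if i ∈ A then (1:ℝ) else -1) * (if i ∈ S then 1 else -1)) := by
    intro D
    rw [neg_one_pow_sdiff, neg_one_pow_sdiff, Finset.prod_mul_distrib]
  simp_rw [h]
  have hp := Finset.prod_add
    (fun i : Fin m => (if i ∈ A then (1:ℝ) else -1) * (if i ∈ S then 1 else -1))
    (fun _ => (1:ℝ)) Finset.univ
  simp only [Finset.prod_const_one, mul_one, Finset.powerset_univ] at hp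
  rw [← hp]
  by_cases hSA : S = A
  · subst hSA
    rw [if_pos rfl]
    have h2 : ∀ i : Fin m, ((if i ∈ S then (1:ℝ) else -1) * (if i ∈ S then 1 else -1) + 1) = 2 := by
      intro i; by_cases hi : i ∈ S <;> simp [hi] <;> norm_num
    rw [Finset.prod_congr rfl (fun i _ => h2 i), Finset.prod_const]
    simp
  · rw [if_neg hSA]
    have : ∃ i : Fin m, ¬ (i ∈ A ↔ i ∈ S) := by
      by_contra hc
      push_neg at hc
      exact hSA (Finset.ext fun i => ((hc i)).symm)
    obtain ⟨i, hi⟩ := this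
    apply Finset.prod_eq_zero (Finset.mem_univ i)
    by_cases h1 : i ∈ A <;> by_cases h2 : i ∈ S <;> simp [h1, h2] at hi ⊢ <;> norm_num

lemma pair_sum {m : ℕ} (D : Finset (Fin m)) (F : Finset (Fin m) → Finset (Fin m) → ℝ) :
    ∑ E ∈ Dᶜ.powerset, ∑ D' ∈ D.powerset, F D' E
      = ∑ S : Finset (Fin m), F (S ∩ D) (S \ D) := by
  rw [← Finset.sum_product']
  apply Finset.sum_nbij' (i := fun p => p.2 ∪ p.1) (j := fun S => (S \ D, S ∩ D))
  · rintro ⟨E, D'⟩ h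
    exact Finset.mem_univ _
  · intro S _
    simp only [Finset.mem_product, Finset.mem_powerset]
    constructor
    · intro i hi
      simp only [Finset.mem_sdiff, Finset.mem_compl] at hi ⊢
      exact hi.2
    · exact Finset.inter_subset_right
  · rintro ⟨E, D'⟩ h
    simp only [Finset.mem_product, Finset.mem_powerset] at h
    obtain ⟨hE, hD'⟩ := h
    have hED : ∀ i ∈ E, i ∉ D := fun i hi => Finset.mem_compl.mp (hE hi)
    ext1
    · ext i
      simp only [Finset.mem_sdiff, Finset.mem_union]
      constructor
      · rintro ⟨hi | hi, hn⟩
        · exact absurd (hD' hi) hn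
        · exact hi
      · intro hi
        exact ⟨Or.inr hi, hED i hi⟩
    · ext i
      simp only [Finset.mem_inter, Finset.mem_union]
      constructor
      · rintro ⟨hi | hi, hn⟩
        · exact hi
        · exact absurd hn (hED i hi)
      · intro hi
        exact ⟨Or.inl hi, hD' hi⟩
  · intro S _
    simp only
    ext i
    simp only [Finset.mem_union, Finset.mem_inter, Finset.mem_sdiff]
    tauto
  · rintro ⟨E, D'⟩ h
    simp only [Finset.mem_product, Finset.mem_powerset] at h
    obtain ⟨hE, hD'⟩ := h
    have hED : ∀ i ∈ E, i ∉ D := fun i hi => Finset.mem_compl.mp (hE hi)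
    have e1 : (D' ∪ E) ∩ D = D' := by
      ext i
      simp only [Finset.mem_inter, Finset.mem_union]
      constructor
      · rintro ⟨hi | hi, hn⟩
        · exact hi
        · exact absurd hn (hED i hi)
      · intro hi; exact ⟨Or.inl hi, hD' hi⟩
    have e2 : (D' ∪ E) \ D = E := by
      ext i
      simp only [Finset.mem_sdiff, Finset.mem_union]
      constructor
      · rintro ⟨hi | hi, hn⟩
        · exact absurd (hD' hi) hn
        · exact hi
      · intro hi; exact ⟨Or.inr hi, hED i hi⟩
    simp only [e1, e2]

theorem banzhaf_inversion {m : ℕ} (μ : Finset (Fin m) → ℝ) (A : Finset (Fin m)) :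
    μ A = ∑ D : Finset (Fin m), (1 / 2 : ℝ) ^ D.card * (-1 : ℝ) ^ (D \ A).card * IB μ D := by
  have step1 : ∀ D : Finset (Fin m),
      (1 / 2 : ℝ) ^ D.card * (-1 : ℝ) ^ (D \ A).card * IB μ D
        = (1/2:ℝ)^m * (-1:ℝ)^(D \ A).card *
            ∑ S : Finset (Fin m), (-1:ℝ)^(D \ S).card * μ S := by
    intro D
    unfold IB
    have hcard : D.card ≤ m := by
      simpa using Finset.card_le_card (Finset.subset_univ D)
    have hpow1 : (1 / (2:ℝ) ^ (m - D.card)) = (1/2:ℝ)^(m - D.card) := by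
      rw [div_pow, one_pow]
    have hpow2 : (1/2:ℝ)^D.card * (1/2:ℝ)^(m - D.card) = (1/2:ℝ)^m := by
      rw [← pow_add]
      congr 1
      omega
    have hinner : ∑ E ∈ Dᶜ.powerset, ∑ D' ∈ D.powerset, (-1 : ℝ) ^ (D.card - D'.card) * μ (D' ∪ E)
        = ∑ S : Finset (Fin m), (-1:ℝ)^(D \ S).card * μ S := by
      rw [pair_sum D (fun D' E => (-1 : ℝ) ^ (D.card - D'.card) * μ (D' ∪ E))]
      apply Finset.sum_congr rfl
      intro S _
      have h1 : (S ∩ D) ∪ (S \ D) = S := by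
        ext i; simp only [Finset.mem_union, Finset.mem_inter, Finset.mem_sdiff]; tauto
      have h2 : D.card - (S ∩ D).card = (D \ S).card := by
        have h3 : D \ (S ∩ D) = D \ S := by
          ext i; simp only [Finset.mem_sdiff, Finset.mem_inter]; tauto
        rw [← h3, Finset.card_sdiff_of_subset Finset.inter_subset_right]
      rw [h1, h2]
    rw [hinner, hpow1, ← hpow2]
    ring
  calc μ A = ∑ S : Finset (Fin m), (if S = A then (1:ℝ) else 0) * μ S := by
        simp
    _ = ∑ S : Finset (Fin m), ((1/2:ℝ)^m * ∑ D : Finset (Fin m),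
          (-1:ℝ)^(D \ A).card * (-1:ℝ)^(D \ S).card) * μ S := by
        apply Finset.sum_congr rfl
        intro S _
        congr 1
        rw [key A S]
        by_cases h : S = A
        · rw [if_pos h, if_pos h, div_pow, one_pow, one_div, inv_mul_cancel₀]
          positivity
        · rw [if_neg h, if_neg h, mul_zero]
    _ = ∑ S : Finset (Fin m), ∑ D : Finset (Fin m),
          (1/2:ℝ)^m * (-1:ℝ)^(D \ A).card * (-1:ℝ)^(D \ S).card * μ S := by
        apply Finset.sum_congr rfl
        intro S _
        rw [Finset.mul_sum, Finset.sum_mul]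
        apply Finset.sum_congr rfl
        intro D _
        ring
    _ = ∑ D : Finset (Fin m), ∑ S : Finset (Fin m),
          (1/2:ℝ)^m * (-1:ℝ)^(D \ A).card * (-1:ℝ)^(D \ S).card * μ S := Finset.sum_comm
    _ = ∑ D : Finset (Fin m), (1 / 2 : ℝ) ^ D.card * (-1 : ℝ) ^ (D \ A).card * IB μ D := by
        apply Finset.sum_congr rfl
        intro D _
        rw [step1 D, Finset.mul_sum]
        apply Finset.sum_congr rfl
        intro S _
        ring
end

section
/- Theorem (Grabisch–Labreuche): For independent Uniform[0,1] inputs Z_1,…,Z_m, the nonnormalized Sobol' index of a nonempty subset A ⊆ C for the multilinear model F_ML of a capacity μ is Var[(F_ML)_A] = (1/3^{|A|}) (μ̂(A))², where μ̂(A) = (−1/2)^{|A|} I^B(A) is the Fourier transform of μ. -/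
open Finset MeasureTheory

/-- The multilinear model of a capacity. -/
def FML {m : ℕ} (μ : Finset (Fin m) → ℝ) (v : Fin m → ℝ) : ℝ :=
  ∑ A : Finset (Fin m), μ A * (∏ j ∈ A, v j) * (∏ j ∈ Aᶜ, (1 - v j))

/-- A capacity: normalized monotone set function. -/
def IsCapacity {m : ℕ} (μ : Finset (Fin m) → ℝ) : Prop :=
  μ ∅ = 0 ∧ μ univ = 1 ∧ ∀ A B : Finset (Fin m), A ⊆ B → μ A ≤ μ B

/-- The joint law of `m` independent Uniform[0,1] random variables. -/
noncomputable def unifPi (m : ℕ) : Measure (Fin m → ℝ) :=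
  Measure.pi fun _ => volume.restrict (Set.Icc (0 : ℝ) 1)

/-- Conditional expectation of `f` given the coordinates in `D` (for independent
Uniform[0,1] inputs): integrate out the remaining coordinates. -/
noncomputable def condE {m : ℕ} (D : Finset (Fin m)) (f : (Fin m → ℝ) → ℝ)
    (v : Fin m → ℝ) : ℝ :=
  ∫ w, f (fun j => if j ∈ D then v j else w j) ∂(unifPi m)

/-- The HDMR component of `f` associated with the subset `A`. -/
noncomputable def hdmr {m : ℕ} (A : Finset (Fin m)) (f : (Fin m → ℝ) → ℝ)
    (v : Fin m → ℝ) : ℝ :=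
  ∑ D ∈ A.powerset, (-1 : ℝ) ^ (A \ D).card * condE D f v

/-- Variance with respect to the uniform product law. -/
noncomputable def varUnif {m : ℕ} (g : (Fin m → ℝ) → ℝ) : ℝ :=
  ∫ v, (g v - ∫ w, g w ∂(unifPi m)) ^ 2 ∂(unifPi m)

noncomputable def nu : Measure ℝ := volume.restrict (Set.Icc (0:ℝ) 1)

instance : IsProbabilityMeasure nu := by
  constructor
  simp [nu, Real.volume_Icc]

lemma pi_integral_prod {m : ℕ} (f : Fin m → ℝ → ℝ) :
    ∫ x, ∏ i, f i (x i) ∂(unifPi m) = ∏ i, ∫ x, f i x ∂nu := by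
  haveI : SigmaFinite nu := inferInstance
  letI : MeasureSpace ℝ := ⟨nu⟩
  exact MeasureTheory.integral_fintype_prod_eq_prod f

lemma pi_integrable_prod {m : ℕ} (f : Fin m → ℝ → ℝ) (hf : ∀ i, Integrable (f i) nu) :
    Integrable (fun x : Fin m → ℝ => ∏ i, f i (x i)) (unifPi m) := by
  haveI : SigmaFinite nu := inferInstance
  letI : MeasureSpace ℝ := ⟨nu⟩
  exact Integrable.fintype_prod hf

lemma integral_nu (f : ℝ → ℝ) : ∫ x, f x ∂nu = ∫ x in (0:ℝ)..1, f x := by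
  rw [intervalIntegral.integral_of_le (by norm_num : (0:ℝ) ≤ 1)]
  exact MeasureTheory.integral_Icc_eq_integral_Ioc

lemma integral_nu_id : ∫ x, x ∂nu = 1/2 := by
  rw [integral_nu]; simp [integral_id]

lemma integral_nu_one_sub : ∫ x, (1 - x) ∂nu = 1/2 := by
  rw [integral_nu]
  rw [intervalIntegral.integral_sub intervalIntegrable_const (intervalIntegral.intervalIntegrable_id)]
  simp [integral_id]; norm_num

lemma integral_nu_centered : ∫ x, (x - 1/2) ∂nu = 0 := by
  rw [integral_nu]
  rw [intervalIntegral.integral_sub intervalIntegral.intervalIntegrable_id intervalIntegrable_const]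
  simp [integral_id]

lemma integral_nu_centered_sq : ∫ x, (x - 1/2)^2 ∂nu = 1/12 := by
  rw [integral_nu]
  rw [intervalIntegral.integral_comp_sub_right (fun x => x^2) (1/2)]
  rw [integral_pow]
  norm_num

-- algebra part

lemma prod_expand {m : ℕ} (B : Finset (Fin m)) (x : Fin m → ℝ) :
    (∏ j ∈ B, (x j + 1/2)) * (∏ j ∈ Bᶜ, (1/2 - x j)) =
      ∑ T : Finset (Fin m), (-1:ℝ)^((T \ B).card) * (1/2)^(m - T.card) * ∏ j ∈ T, x j := by
  classical
  have h2 : ∀ j ∈ Bᶜ, (1/2 - x j : ℝ) = -x j + 1/2 := fun j _ => by ring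
  rw [prod_congr rfl h2, prod_add, prod_add, sum_mul_sum, ← sum_product']
  refine sum_nbij' (fun p => p.1 ∪ p.2) (fun T => (T ∩ B, T \ B)) ?_ ?_ ?_ ?_ ?_
  · intro p hp; exact mem_univ _
  · intro T _
    simp only [mem_product, mem_powerset]
    exact ⟨inter_subset_right, fun a ha => mem_compl.2 (mem_sdiff.1 ha).2⟩
  · rintro ⟨S, S'⟩ hp
    simp only [mem_product, mem_powerset] at hp
    obtain ⟨hS, hS'⟩ := hp
    have hS'B : ∀ a ∈ S', a ∉ B := fun a ha => mem_compl.1 (hS' ha)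
    have h1 : (S ∪ S') ∩ B = S := by
      ext a
      simp only [mem_inter, mem_union]
      constructor
      · rintro ⟨h | h, hb⟩
        · exact h
        · exact absurd hb (hS'B a h)
      · intro h; exact ⟨Or.inl h, hS h⟩
    have h2 : (S ∪ S') \ B = S' := by
      ext a
      simp only [mem_sdiff, mem_union]
      constructor
      · rintro ⟨h | h, hb⟩
        · exact absurd (hS h) hb
        · exact h
      · intro h; exact ⟨Or.inr h, hS'B a h⟩
    simp [h1, h2]
  · intro T _
    simp only
    ext a
    simp only [mem_union, mem_inter, mem_sdiff]
    tauto
  · rintro ⟨S, S'⟩ hp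
    simp only [mem_product, mem_powerset] at hp
    obtain ⟨hS, hS'⟩ := hp
    have hS'B : ∀ a ∈ S', a ∉ B := fun a ha => mem_compl.1 (hS' ha)
    have hdisj : Disjoint S S' := by
      rw [disjoint_left]; exact fun a ha ha' => hS'B a ha' (hS ha)
    have h2 : (S ∪ S') \ B = S' := by
      ext a
      simp only [mem_sdiff, mem_union]
      constructor
      · rintro ⟨h | h, hb⟩
        · exact absurd (hS h) hb
        · exact h
      · intro h; exact ⟨Or.inr h, hS'B a h⟩
    have hcard : (B \ S).card + (Bᶜ \ S').card = m - (S ∪ S').card := by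
      rw [card_sdiff_of_subset hS, card_sdiff_of_subset hS', card_union_of_disjoint hdisj, card_compl,
        Fintype.card_fin]
      have h1 : S.card ≤ B.card := card_le_card hS
      have h2 : S'.card ≤ Bᶜ.card := card_le_card hS'
      have h3 : B.card ≤ m := by simpa using card_le_univ B
      have h4 : Bᶜ.card = m - B.card := by rw [card_compl, Fintype.card_fin]
      omega
    have hneg : ∏ j ∈ S', (-x j) = (-1:ℝ)^S'.card * ∏ j ∈ S', x j := by
      rw [← prod_const, ← prod_mul_distrib]
      exact prod_congr rfl fun j _ => by ring
    rw [h2, ← hcard, prod_union hdisj, hneg, prod_const, prod_const, pow_add]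
    ring

lemma IB_sum {m : ℕ} (μ : Finset (Fin m) → ℝ) (T : Finset (Fin m)) :
    ∑ D ∈ Tᶜ.powerset, ∑ D' ∈ T.powerset, (-1:ℝ) ^ (T.card - D'.card) * μ (D' ∪ D)
      = ∑ B : Finset (Fin m), (-1:ℝ)^((T \ B).card) * μ B := by
  classical
  rw [← sum_product']
  refine sum_nbij' (fun p => p.2 ∪ p.1) (fun B => (B \ T, B ∩ T)) ?_ ?_ ?_ ?_ ?_
  · intro p hp; exact mem_univ _
  · intro B _
    simp only [mem_product, mem_powerset]
    exact ⟨fun a ha => mem_compl.2 (mem_sdiff.1 ha).2, inter_subset_right⟩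
  · rintro ⟨D, D'⟩ hp
    simp only [mem_product, mem_powerset] at hp
    obtain ⟨hD, hD'⟩ := hp
    have hDT : ∀ a ∈ D, a ∉ T := fun a ha => mem_compl.1 (hD ha)
    have h1 : (D' ∪ D) \ T = D := by
      ext a
      simp only [mem_sdiff, mem_union]
      constructor
      · rintro ⟨h | h, hb⟩
        · exact absurd (hD' h) hb
        · exact h
      · intro h; exact ⟨Or.inr h, hDT a h⟩
    have h2 : (D' ∪ D) ∩ T = D' := by
      ext a
      simp only [mem_inter, mem_union]
      constructor
      · rintro ⟨h | h, hb⟩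
        · exact h
        · exact absurd hb (hDT a h)
      · intro h; exact ⟨Or.inl h, hD' h⟩
    simp [h1, h2]
  · intro B _
    simp only
    ext a
    simp only [mem_union, mem_inter, mem_sdiff]
    tauto
  · rintro ⟨D, D'⟩ hp
    simp only [mem_product, mem_powerset] at hp
    obtain ⟨hD, hD'⟩ := hp
    have hDT : ∀ a ∈ D, a ∉ T := fun a ha => mem_compl.1 (hD ha)
    have h1 : T \ (D' ∪ D) = T \ D' := by
      ext a
      simp only [mem_sdiff, mem_union]
      constructor
      · rintro ⟨ht, h⟩; exact ⟨ht, fun hd => h (Or.inl hd)⟩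
      · rintro ⟨ht, h⟩
        refine ⟨ht, ?_⟩
        rintro (hd | hd)
        · exact h hd
        · exact hDT a hd ht
    rw [h1, card_sdiff_of_subset hD']

lemma fourierFML {m : ℕ} (μ : Finset (Fin m) → ℝ) (v : Fin m → ℝ) :
    FML μ v = ∑ T : Finset (Fin m), IB μ T * ∏ j ∈ T, (v j - 1/2) := by
  classical
  have key : ∀ B : Finset (Fin m),
      μ B * (∏ j ∈ B, v j) * (∏ j ∈ Bᶜ, (1 - v j))
        = ∑ T : Finset (Fin m),
            μ B * ((-1:ℝ)^((T \ B).card) * (1/2)^(m - T.card) * ∏ j ∈ T, (v j - 1/2)) := by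
    intro B
    rw [mul_assoc,
      show (∏ j ∈ B, v j) = ∏ j ∈ B, ((v j - 1/2) + 1/2) from
        prod_congr rfl fun j _ => by ring,
      show (∏ j ∈ Bᶜ, (1 - v j)) = ∏ j ∈ Bᶜ, (1/2 - (v j - 1/2)) from
        prod_congr rfl fun j _ => by ring,
      prod_expand B (fun j => v j - 1/2), mul_sum]
  unfold FML
  rw [sum_congr rfl fun B _ => key B, sum_comm]
  refine sum_congr rfl fun T _ => ?_
  rw [IB, IB_sum, mul_sum, sum_mul]
  refine sum_congr rfl fun B _ => ?_
  have h1 : ((1:ℝ)/2)^(m - T.card) = 1/2^(m - T.card) := by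
    rw [div_pow, one_pow]
  rw [h1]
  ring

lemma condE_FML {m : ℕ} (μ : Finset (Fin m) → ℝ) (D : Finset (Fin m)) (v : Fin m → ℝ) :
    condE D (FML μ) v = FML μ (fun j => if j ∈ D then v j else 1/2) := by
  classical
  set g : Finset (Fin m) → Fin m → ℝ → ℝ := fun A j t =>
    if j ∈ A then (if j ∈ D then v j else t) else 1 - (if j ∈ D then v j else t) with hg
  have key : ∀ u : Fin m → ℝ, FML μ (fun j => if j ∈ D then v j else u j)
      = ∑ A : Finset (Fin m), μ A * ∏ j, g A j (u j) := by
    intro u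
    unfold FML
    refine sum_congr rfl fun A _ => ?_
    rw [mul_assoc, ← prod_mul_prod_compl A (fun j => g A j (u j)),
      show (∏ i ∈ A, g A i (u i)) = ∏ j ∈ A, (if j ∈ D then v j else u j) from
        prod_congr rfl fun j hj => by simp [hg, hj],
      show (∏ i ∈ Aᶜ, g A i (u i)) = ∏ j ∈ Aᶜ, (1 - if j ∈ D then v j else u j) from
        prod_congr rfl fun j hj => by simp [hg, mem_compl.1 hj]]
  have hid : Integrable (fun t : ℝ => t) nu := by
    have := continuous_id.integrableOn_Icc (a := (0:ℝ)) (b := 1) (μ := volume)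
    exact this
  have hint : ∀ A : Finset (Fin m),
      Integrable (fun w : Fin m → ℝ => ∏ j, g A j (w j)) (unifPi m) := by
    intro A
    apply pi_integrable_prod
    intro j
    by_cases h1 : j ∈ A <;> by_cases h2 : j ∈ D <;> simp only [hg, h1, h2, if_pos, if_neg,
      if_true, if_false]
    · exact integrable_const _
    · exact hid
    · exact integrable_const _
    · exact (integrable_const (1:ℝ)).sub hid
  unfold condE
  have : (fun w : Fin m → ℝ => FML μ fun j => if j ∈ D then v j else w j)
      = fun w => ∑ A : Finset (Fin m), μ A * ∏ j, g A j (w j) := funext key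
  rw [this, integral_finset_sum _ (fun A _ => (hint A).const_mul (μ A)),
    key (fun _ => 1/2)]
  refine sum_congr rfl fun A _ => ?_
  rw [MeasureTheory.integral_const_mul]
  congr 1
  rw [pi_integral_prod]
  refine prod_congr rfl fun j _ => ?_
  by_cases h1 : j ∈ A <;> by_cases h2 : j ∈ D <;>
    simp [hg, h1, h2, integral_nu_id, integral_nu_one_sub] <;> norm_num

lemma sum_powerset_neg_one_real {α : Type*} [DecidableEq α] (x : Finset α) :
    (∑ t ∈ x.powerset, (-1 : ℝ) ^ t.card) = if x = ∅ then 1 else 0 := by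
  have := Finset.sum_powerset_neg_one_pow_card (x := x)
  have h : ((∑ t ∈ x.powerset, (-1 : ℤ) ^ t.card : ℤ) : ℝ)
      = ∑ t ∈ x.powerset, (-1 : ℝ) ^ t.card := by push_cast; rfl
  rw [← h, this]
  split_ifs <;> norm_num

lemma alt_sum {m : ℕ} (A T : Finset (Fin m)) :
    (∑ D ∈ A.powerset, if T ⊆ D then ((-1:ℝ))^((A \ D).card) else 0)
      = if T = A then 1 else 0 := by
  classical
  by_cases hTA : T ⊆ A
  · rw [← sum_filter]
    have : ∑ D ∈ A.powerset.filter (fun D => T ⊆ D), ((-1:ℝ))^((A \ D).card)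
        = ∑ E ∈ (A \ T).powerset, ((-1:ℝ))^E.card := by
      refine sum_nbij' (fun D => A \ D) (fun E => A \ E) ?_ ?_ ?_ ?_ ?_
      · intro D hD
        simp only [mem_filter, mem_powerset] at hD
        exact mem_powerset.2 (sdiff_subset_sdiff Subset.rfl hD.2)
      · intro E hE
        simp only [mem_powerset] at hE
        simp only [mem_filter, mem_powerset]
        refine ⟨sdiff_subset, ?_⟩
        rw [subset_sdiff]
        exact ⟨hTA, (sdiff_disjoint.mono_left hE).symm⟩
      · intro D hD
        simp only [mem_filter, mem_powerset] at hD
        show A \ (A \ D) = D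
        rw [sdiff_sdiff_self_left, inter_eq_right.2 hD.1]
      · intro E hE
        simp only [mem_powerset] at hE
        show A \ (A \ E) = E
        rw [sdiff_sdiff_self_left, inter_eq_right.2 (hE.trans sdiff_subset)]
      · intro D _; rfl
    rw [this, sum_powerset_neg_one_real]
    by_cases h : T = A
    · subst h; simp
    · rw [if_neg h, if_neg
        (fun he => h (Subset.antisymm hTA (sdiff_eq_empty_iff_subset.1 he)))]
  · rw [sum_congr rfl fun D hD => if_neg fun hTD => hTA (hTD.trans (mem_powerset.1 hD)),
      sum_const_zero, if_neg]
    rintro rfl; exact hTA Subset.rfl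

lemma hdmr_eq {m : ℕ} (μ : Finset (Fin m) → ℝ) (A : Finset (Fin m)) (v : Fin m → ℝ) :
    hdmr A (FML μ) v = IB μ A * ∏ j ∈ A, (v j - 1/2) := by
  classical
  unfold hdmr
  have step1 : ∀ D : Finset (Fin m), condE D (FML μ) v
      = ∑ T : Finset (Fin m), IB μ T * (if T ⊆ D then ∏ j ∈ T, (v j - 1/2) else 0) := by
    intro D
    rw [condE_FML, fourierFML]
    refine sum_congr rfl fun T _ => ?_
    congr 1
    by_cases hTD : T ⊆ D
    · rw [if_pos hTD]
      exact prod_congr rfl fun j hj => by simp [hTD hj]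
    · rw [if_neg hTD]
      obtain ⟨j, hjT, hjD⟩ := not_subset.1 hTD
      refine prod_eq_zero hjT ?_
      simp [hjD]
  simp_rw [step1, mul_sum]
  rw [sum_comm]
  have step2 : ∀ T : Finset (Fin m),
      (∑ D ∈ A.powerset, (-1:ℝ)^((A \ D).card) * (IB μ T * (if T ⊆ D then ∏ j ∈ T, (v j - 1/2) else 0)))
        = (if T = A then 1 else 0) * (IB μ T * ∏ j ∈ T, (v j - 1/2)) := by
    intro T
    rw [← alt_sum A T, sum_mul]
    refine sum_congr rfl fun D _ => ?_
    split_ifs <;> ring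
  rw [sum_congr rfl fun T _ => step2 T]
  simp

lemma varUnif_prod {m : ℕ} (A : Finset (Fin m)) (hA : A.Nonempty) (c : ℝ) :
    varUnif (fun v : Fin m → ℝ => c * ∏ j ∈ A, (v j - 1/2)) = c^2 * (1/12)^A.card := by
  classical
  obtain ⟨j0, hj0⟩ := hA
  set f : Fin m → ℝ → ℝ := fun j t => if j ∈ A then t - 1/2 else 1 with hf
  have h1 : ∀ v : Fin m → ℝ, (∏ j ∈ A, (v j - 1/2)) = ∏ j, f j (v j) := by
    intro v
    rw [← prod_mul_prod_compl A (fun j => f j (v j)),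
      show (∏ i ∈ Aᶜ, f i (v i)) = 1 from prod_eq_one fun j hj => if_neg (mem_compl.1 hj),
      mul_one]
    exact prod_congr rfl fun j hj => (if_pos hj).symm
  have hmean : ∫ v, ∏ j, f j (v j) ∂(unifPi m) = 0 := by
    rw [pi_integral_prod]
    refine prod_eq_zero (mem_univ j0) ?_
    have : f j0 = fun t => t - 1/2 := funext fun t => if_pos hj0
    rw [this]
    exact integral_nu_centered
  unfold varUnif
  simp_rw [h1]
  rw [MeasureTheory.integral_const_mul, hmean, mul_zero]
  simp only [sub_zero]
  have hsq : ∀ v : Fin m → ℝ, (c * ∏ j, f j (v j))^2 = c^2 * ∏ j, (f j (v j))^2 := by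
    intro v; rw [mul_pow, prod_pow]
  simp_rw [hsq]
  rw [MeasureTheory.integral_const_mul]
  congr 1
  rw [pi_integral_prod (fun j t => (f j t)^2)]
  have h2 : ∀ j : Fin m, (∫ t, (f j t)^2 ∂nu) = if j ∈ A then (1/12 : ℝ) else 1 := by
    intro j
    by_cases h : j ∈ A
    · rw [if_pos h, show (fun t : ℝ => (f j t)^2) = fun t => (t - 1/2)^2 from
        funext fun t => by rw [hf]; simp [h]]
      exact integral_nu_centered_sq
    · rw [if_neg h, show (fun t : ℝ => (f j t)^2) = fun t => 1 from
        funext fun t => by rw [hf]; simp [h]]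
      simp
  rw [prod_congr rfl fun j _ => h2 j, prod_ite_mem, univ_inter, prod_const]

/-- Grabisch–Labreuche: the nonnormalized Sobol' index of a nonempty subset `A` for
the multilinear model equals `(1/3^|A|) (μ̂(A))²` where `μ̂(A) = (−1/2)^{|A|} I^B(A)`
is the Fourier transform of `μ`. -/
theorem sobol_multilinear_fourier {m : ℕ} (μ : Finset (Fin m) → ℝ)
    (hμ : IsCapacity μ) (A : Finset (Fin m)) (hA : A.Nonempty) :
    varUnif (hdmr A (FML μ)) =
      (1 / 3 ^ A.card) * ((- (1 / 2) : ℝ) ^ A.card * IB μ A) ^ 2 := by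
  rw [show hdmr A (FML μ) = fun v => IB μ A * ∏ j ∈ A, (v j - 1/2) from
    funext fun v => hdmr_eq μ A v]
  rw [varUnif_prod A hA]
  rw [mul_pow]
  have h4 : ((-(1/2):ℝ)^A.card)^2 = (1/4)^A.card := by
    rw [← pow_mul, mul_comm, pow_mul]; norm_num
  rw [h4]
  have h3 : (1/3^A.card : ℝ) = (1/3)^A.card := by rw [div_pow, one_pow]
  rw [h3]
  have h12 : ((1:ℝ)/3)^A.card * (1/4)^A.card = (1/12)^A.card := by
    rw [← mul_pow]; norm_num
  rw [← mul_assoc, h12]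
  ring
end

section
/- The Banzhaf interaction index equals the scaled sum of Möbius coefficients of supersets: I^B(A) = Σ_{B ⊇ A} (1/2)^{|B\A|} m(B), where m is the Möbius transform of μ. -/
open Finset

/-- The Möbius transform of a set function. -/
def moebius {m : ℕ} (μ : Finset (Fin m) → ℝ) (A : Finset (Fin m)) : ℝ :=
  ∑ D ∈ A.powerset, (-1 : ℝ) ^ (A \ D).card * μ D

private lemma sum_powerset_pow {α : Type*} [DecidableEq α] (S : Finset α) (x : ℝ) :
    ∑ T ∈ S.powerset, x ^ T.card = (1 + x) ^ S.card := by
  induction S using Finset.induction with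
  | empty => simp
  | insert _ _ ha ih =>
    rename_i a s
    rw [Finset.sum_powerset_insert ha, ih, Finset.card_insert_of_notMem ha]
    have : ∑ T ∈ s.powerset, x ^ (insert a T).card = x * ∑ T ∈ s.powerset, x ^ T.card := by
      rw [Finset.mul_sum]
      refine Finset.sum_congr rfl fun T hT => ?_
      rw [Finset.card_insert_of_notMem fun h => ha (Finset.mem_powerset.mp hT h), pow_succ]
      ring
    rw [this, ih, pow_succ]
    ring

theorem IB_eq_sum_moebius_supersets {m : ℕ} (μ : Finset (Fin m) → ℝ)
    (A : Finset (Fin m)) :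
    IB μ A = ∑ B ∈ (univ : Finset (Finset (Fin m))).filter (fun B => A ⊆ B),
      (1 / 2 : ℝ) ^ (B \ A).card * moebius μ B := by
  classical
  -- Left side in normal form
  have hL : (∑ D ∈ Aᶜ.powerset, ∑ D' ∈ A.powerset, (-1 : ℝ) ^ (A.card - D'.card) * μ (D' ∪ D))
      = ∑ E : Finset (Fin m), (-1 : ℝ) ^ (A \ E).card * μ E := by
    rw [← Finset.sum_product']
    refine Finset.sum_nbij' (fun p => p.2 ∪ p.1) (fun E => (E \ A, E ∩ A)) ?_ ?_ ?_ ?_ ?_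
    · intro p hp; exact Finset.mem_univ _
    · intro E hE
      rw [Finset.mem_product]
      constructor
      · rw [Finset.mem_powerset]; intro x hx
        simp only [Finset.mem_sdiff] at hx
        simp [Finset.mem_compl, hx.2]
      · rw [Finset.mem_powerset]; exact Finset.inter_subset_right
    · rintro ⟨D, D'⟩ hp
      rw [Finset.mem_product, Finset.mem_powerset, Finset.mem_powerset] at hp
      obtain ⟨hD, hD'⟩ := hp
      have hDA : Disjoint D A := by
        rw [Finset.disjoint_left]; intro x hx; have := hD hx; simpa [Finset.mem_compl] using this
      have h1 : (D' ∪ D) \ A = D := by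
        rw [Finset.union_sdiff_distrib, Finset.sdiff_eq_empty_iff_subset.mpr hD',
          Finset.empty_union, (Finset.sdiff_eq_self_of_disjoint hDA)]
      have h2 : (D' ∪ D) ∩ A = D' := by
        rw [Finset.union_inter_distrib_right, Finset.inter_eq_left.mpr hD',
          Finset.disjoint_iff_inter_eq_empty.mp hDA, Finset.union_empty]
      simp [h1, h2]
    · intro E hE
      exact sup_inf_sdiff E A
    · rintro ⟨D, D'⟩ hp
      rw [Finset.mem_product, Finset.mem_powerset, Finset.mem_powerset] at hp
      obtain ⟨hD, hD'⟩ := hp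
      have hDA : Disjoint A D := by
        rw [Finset.disjoint_left]; intro x hx hx'; have := hD hx'; simp [Finset.mem_compl, hx] at this
      have h1 : A \ (D' ∪ D) = A \ D' := by
        rw [Finset.sdiff_union_distrib, Finset.sdiff_eq_self_of_disjoint hDA,
          Finset.inter_eq_left.mpr (Finset.sdiff_subset)]
      have h2 : A.card - D'.card = (A \ D').card := (Finset.card_sdiff_of_subset hD').symm
      simp [h1, h2]
  -- key inner sum computation for the right side
  have key : ∀ D : Finset (Fin m),
      (∑ B ∈ (univ : Finset (Finset (Fin m))).filter (fun B => A ∪ D ⊆ B),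
        (1 / 2 : ℝ) ^ (B \ A).card * (-1 : ℝ) ^ (B \ D).card)
      = (1 / 2 : ℝ) ^ (m - A.card) * (-1 : ℝ) ^ (A \ D).card := by
    intro D
    have step : (∑ B ∈ (univ : Finset (Finset (Fin m))).filter (fun B => A ∪ D ⊆ B),
        (1 / 2 : ℝ) ^ (B \ A).card * (-1 : ℝ) ^ (B \ D).card)
        = ∑ T ∈ ((A ∪ D)ᶜ).powerset,
            ((1 / 2 : ℝ) ^ (D \ A).card * (-1 : ℝ) ^ (A \ D).card) * (-1/2 : ℝ) ^ T.card := by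
      refine Finset.sum_nbij' (fun B => B \ (A ∪ D)) (fun T => (A ∪ D) ∪ T) ?_ ?_ ?_ ?_ ?_
      · intro B hB
        rw [Finset.mem_powerset]
        intro x hx
        exact Finset.mem_compl.mpr (Finset.mem_sdiff.mp hx).2
      · intro T hT
        simp only [Finset.mem_filter, Finset.mem_univ, true_and]
        exact Finset.subset_union_left
      · intro B hB
        simp only [Finset.mem_filter, Finset.mem_univ, true_and] at hB
        exact Finset.union_sdiff_of_subset hB
      · intro T hT
        rw [Finset.mem_powerset] at hT
        have hdisj : Disjoint (A ∪ D) T := by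
          rw [Finset.disjoint_right]; intro x hx
          have := hT hx; simpa [Finset.mem_compl] using this
        exact Finset.union_sdiff_cancel_left hdisj
      · intro B hB
        simp only [Finset.mem_filter, Finset.mem_univ, true_and] at hB
        have hTA : Disjoint (B \ (A ∪ D)) A := by
          rw [Finset.disjoint_left]; intro x hx
          simp only [Finset.mem_sdiff, Finset.mem_union] at hx
          exact fun h => hx.2 (Or.inl h)
        have hTD : Disjoint (B \ (A ∪ D)) D := by
          rw [Finset.disjoint_left]; intro x hx
          simp only [Finset.mem_sdiff, Finset.mem_union] at hx
          exact fun h => hx.2 (Or.inr h)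
        have hBsplit : B = (A ∪ D) ∪ (B \ (A ∪ D)) := (Finset.union_sdiff_of_subset hB).symm
        have e1 : (B \ A).card = (D \ A).card + (B \ (A ∪ D)).card := by
          conv_lhs => rw [hBsplit]
          rw [Finset.union_sdiff_distrib, Finset.union_sdiff_left,
            Finset.sdiff_eq_self_of_disjoint hTA,
            Finset.card_union_of_disjoint]
          rw [Finset.disjoint_left]
          intro x hx
          simp only [Finset.mem_sdiff, Finset.mem_union] at *
          exact fun h => h.2 (Or.inr hx.1)
        have e2 : (B \ D).card = (A \ D).card + (B \ (A ∪ D)).card := by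
          conv_lhs => rw [hBsplit]
          rw [Finset.union_sdiff_distrib, Finset.union_sdiff_right,
            Finset.sdiff_eq_self_of_disjoint hTD,
            Finset.card_union_of_disjoint]
          rw [Finset.disjoint_left]
          intro x hx
          simp only [Finset.mem_sdiff, Finset.mem_union] at *
          exact fun h => h.2 (Or.inl hx.1)
        rw [e1, e2, pow_add, pow_add]
        have : (-1/2 : ℝ) ^ (B \ (A ∪ D)).card
            = (-1 : ℝ) ^ (B \ (A ∪ D)).card * (1/2 : ℝ) ^ (B \ (A ∪ D)).card := by
          rw [← mul_pow]; norm_num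
        rw [this]; ring
    rw [step, ← Finset.mul_sum, sum_powerset_pow]
    have hcard : ((A ∪ D)ᶜ : Finset (Fin m)).card = m - (A ∪ D).card := by
      rw [Finset.card_compl, Fintype.card_fin]
    have hle : (A ∪ D).card ≤ m := by
      simpa using Finset.card_le_card (Finset.subset_univ (A ∪ D))
    have hAD : (D \ A).card + A.card = (A ∪ D).card := by
      rw [Finset.card_sdiff_add_card, Finset.union_comm]
    have hexp : (D \ A).card + (m - (A ∪ D).card) = m - A.card := by omega
    have : (1 + (-1/2) : ℝ) = 1/2 := by norm_num
    rw [hcard, this, mul_comm ((1/2:ℝ) ^ (D \ A).card) _, mul_assoc, ← pow_add, hexp]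
    ring
  -- Right side in normal form
  have hR : (∑ B ∈ (univ : Finset (Finset (Fin m))).filter (fun B => A ⊆ B),
      (1 / 2 : ℝ) ^ (B \ A).card * moebius μ B)
      = ∑ E : Finset (Fin m),
          ((1 / 2 : ℝ) ^ (m - A.card) * (-1 : ℝ) ^ (A \ E).card) * μ E := by
    simp only [moebius, Finset.mul_sum]
    rw [Finset.sum_comm' (s' := fun D => (univ : Finset (Finset (Fin m))).filter
        (fun B => A ∪ D ⊆ B)) (t' := (univ : Finset (Finset (Fin m))))
      (fun B D => by
        simp only [Finset.mem_filter, Finset.mem_univ, true_and, and_true, Finset.mem_powerset,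
          Finset.union_subset_iff])]
    refine Finset.sum_congr rfl fun E _ => ?_
    simp only [← mul_assoc]
    rw [← Finset.sum_mul, key E]
  -- Conclude
  rw [IB, hL, hR, Finset.mul_sum]
  refine Finset.sum_congr rfl fun E _ => ?_
  rw [div_pow, one_pow]
  ring
end
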